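/- Let 1 < p ≤ 2. There exists a constant C > 0 such that for every measurable kernel K : (0,1/2] × [1,∞) → ℂ satisfying |K(t,r)| ≤ t^{−(α+1/2)} e^{−ρr} r^{−1} for all 0 < t ≤ 1/2 and r ≥ 1, and every f ∈ L^p((0,∞),dμ), one has ( ∫₀^{1/2} | ∫₁^∞ K(t,r) f(r) Δ(r) dr |^p Δ(t) dt )^{1/p} ≤ C ‖f‖_{L^p((0,∞),dμ)}. -/

import Mathlib

open MeasureTheory Real Set
open scoped ENNReal NNReal

/-- The Jacobi weight `Δ(t) = (2 sinh t)^(2α+1) (2 cosh t)^(2β+1)`. -/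
noncomputable def Δj (α β : ℝ) (t : ℝ) : ℝ :=
  (2 * Real.sinh t) ^ (2 * α + 1) * (2 * Real.cosh t) ^ (2 * β + 1)

/-- The measure `dμ = Δ(t) dt`. -/
noncomputable def μj (α β : ℝ) : Measure ℝ :=
  MeasureTheory.volume.withDensity fun t => ENNReal.ofReal (Δj α β t)

lemma measurable_Δj (α β : ℝ) : Measurable (Δj α β) :=
  ((measurable_const.mul Real.measurable_sinh).pow_const _).mul
    ((measurable_const.mul Real.measurable_cosh).pow_const _)

lemma Δj_pos (α β : ℝ) {t : ℝ} (ht : 0 < t) : 0 < Δj α β t :=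
  mul_pos (Real.rpow_pos_of_pos (by nlinarith [Real.sinh_pos_iff.mpr ht]) _)
    (Real.rpow_pos_of_pos (by nlinarith [Real.cosh_pos t]) _)

lemma two_sinh_le {t : ℝ} (ht0 : 0 < t) (ht : t ≤ 1/2) : 2 * Real.sinh t ≤ 4 * t := by
  rw [Real.sinh_eq]
  have hab : Real.exp t * Real.exp (-t) = 1 := by rw [← Real.exp_add]; simp
  have hb : 1 - t ≤ Real.exp (-t) := by nlinarith [Real.add_one_le_exp (-t)]
  have hb1 : Real.exp (-t) ≤ 1 := Real.exp_le_one_iff.mpr (by linarith)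
  have hb2 : (1:ℝ)/2 ≤ Real.exp (-t) := by linarith
  nlinarith [Real.exp_pos (-t), Real.exp_pos t]

lemma two_cosh_le {t : ℝ} (ht0 : 0 < t) (ht : t ≤ 1/2) : 2 * Real.cosh t ≤ 4 := by
  rw [Real.cosh_eq]
  have hab : Real.exp t * Real.exp (-t) = 1 := by rw [← Real.exp_add]; simp
  have hb : 1 - t ≤ Real.exp (-t) := by nlinarith [Real.add_one_le_exp (-t)]
  have hb1 : Real.exp (-t) ≤ 1 := Real.exp_le_one_iff.mpr (by linarith)
  have hb2 : (1:ℝ)/2 ≤ Real.exp (-t) := by linarith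
  nlinarith [Real.exp_pos (-t), Real.exp_pos t]

lemma cosh_le_exp' {r : ℝ} (hr : 0 ≤ r) : Real.cosh r ≤ Real.exp r := by
  rw [Real.cosh_eq]
  have : Real.exp (-r) ≤ Real.exp r := Real.exp_le_exp.mpr (by linarith)
  linarith

lemma Δj_le_small {α β : ℝ} (hα : 0 ≤ 2*α+1) (hβ' : 0 ≤ 2*β+1) {t : ℝ}
    (ht0 : 0 < t) (ht : t ≤ 1/2) :
    Δj α β t ≤ (4:ℝ)^(2*α+1) * 4^(2*β+1) * t^(2*α+1) := by
  have hs : 0 < 2 * Real.sinh t := by nlinarith [Real.sinh_pos_iff.mpr ht0]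
  have hc : 0 < 2 * Real.cosh t := by nlinarith [Real.cosh_pos t]
  have h1 : (2*Real.sinh t)^(2*α+1) ≤ (4*t)^(2*α+1) :=
    Real.rpow_le_rpow hs.le (two_sinh_le ht0 ht) hα
  have h2 : (2*Real.cosh t)^(2*β+1) ≤ (4:ℝ)^(2*β+1) :=
    Real.rpow_le_rpow hc.le (two_cosh_le ht0 ht) hβ'
  have h3 : ((4:ℝ)*t)^(2*α+1) = (4:ℝ)^(2*α+1) * t^(2*α+1) :=
    Real.mul_rpow (by norm_num) ht0.le
  calc Δj α β t ≤ (4*t)^(2*α+1) * (4:ℝ)^(2*β+1) := by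
        exact mul_le_mul h1 h2 (Real.rpow_nonneg hc.le _) (Real.rpow_nonneg (by positivity) _)
    _ = (4:ℝ)^(2*α+1) * 4^(2*β+1) * t^(2*α+1) := by rw [h3]; ring

lemma Δj_le_large {α β : ℝ} (hα : 0 ≤ 2*α+1) (hβ' : 0 ≤ 2*β+1) {r : ℝ} (hr : 1 ≤ r) :
    Δj α β r ≤ 2^(2*(α+β+1)) * Real.exp (2*(α+β+1)*r) := by
  have hr0 : (0:ℝ) < r := lt_of_lt_of_le one_pos hr
  have hs0 : 0 < 2 * Real.sinh r := by nlinarith [Real.sinh_pos_iff.mpr hr0]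
  have hc0 : 0 < 2 * Real.cosh r := by nlinarith [Real.cosh_pos r]
  have he0 : 0 < 2 * Real.exp r := by positivity
  have hsc : Real.sinh r ≤ Real.cosh r := by
    rw [Real.sinh_eq, Real.cosh_eq]; nlinarith [Real.exp_pos (-r)]
  have hse : 2 * Real.sinh r ≤ 2 * Real.exp r := by
    have := cosh_le_exp' hr0.le; linarith
  have hce : 2 * Real.cosh r ≤ 2 * Real.exp r := by
    have := cosh_le_exp' hr0.le; linarith
  have h1 : (2*Real.sinh r)^(2*α+1) ≤ (2*Real.exp r)^(2*α+1) :=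
    Real.rpow_le_rpow hs0.le hse hα
  have h2 : (2*Real.cosh r)^(2*β+1) ≤ (2*Real.exp r)^(2*β+1) :=
    Real.rpow_le_rpow hc0.le hce hβ'
  have key : (2*Real.exp r)^(2*α+1) * (2*Real.exp r)^(2*β+1)
      = 2^(2*(α+β+1)) * Real.exp (2*(α+β+1)*r) := by
    rw [← Real.rpow_add he0]
    have he : 2*α+1 + (2*β+1) = 2*(α+β+1) := by ring
    rw [he, Real.mul_rpow (by norm_num) (Real.exp_pos r).le, ← Real.exp_mul]
    ring_nf
  calc Δj α β r ≤ (2*Real.exp r)^(2*α+1) * (2*Real.exp r)^(2*β+1) :=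
        mul_le_mul h1 h2 (Real.rpow_nonneg hc0.le _) (Real.rpow_nonneg he0.le _)
    _ = _ := key

lemma vol_restrict_ac (α β : ℝ) :
    (volume.restrict (Ici (1:ℝ))) ≪ ((μj α β).restrict (Ioi 0)) := by
  intro s hs
  set t := toMeasurable ((μj α β).restrict (Ioi 0)) s with htdef
  have hst : s ⊆ t := subset_toMeasurable _ s
  have htm : MeasurableSet t := measurableSet_toMeasurable _ _
  have hμt : (μj α β).restrict (Ioi 0) t = 0 := by
    rw [measure_toMeasurable]; exact hs
  rw [Measure.restrict_apply htm] at hμt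
  have hti : MeasurableSet (t ∩ Ioi 0) := htm.inter measurableSet_Ioi
  rw [μj, withDensity_apply _ hti] at hμt
  have h0 : ∀ᵐ x ∂(volume.restrict (t ∩ Ioi 0)), ENNReal.ofReal (Δj α β x) = 0 := by
    rwa [lintegral_eq_zero_iff (measurable_Δj α β).ennreal_ofReal] at hμt
  rw [ae_restrict_iff' hti] at h0
  have h1 : volume (t ∩ Ioi 0) = 0 := by
    rw [measure_eq_zero_iff_ae_notMem]
    filter_upwards [h0] with x hx
    intro hmem
    have hpos := Δj_pos α β hmem.2
    have := hx hmem
    rw [ENNReal.ofReal_eq_zero] at this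
    linarith
  rw [Measure.restrict_apply' measurableSet_Ici]
  refine le_antisymm (le_trans (measure_mono ?_) h1.le) zero_le
  intro x hx
  exact ⟨hst hx.1, mem_Ioi.mpr (lt_of_lt_of_le one_pos hx.2)⟩

set_option maxHeartbeats 1000000 in
theorem stmt14 (α β : ℝ) (hβα : β < α) (hβ : -(1/2 : ℝ) < β)
    (p : ℝ) (hp1 : 1 < p) (hp2 : p ≤ 2) :
    ∃ C : ℝ, 0 < C ∧
      ∀ K : ℝ → ℝ → ℂ, Measurable (Function.uncurry K) →
        (∀ t r : ℝ, t ∈ Set.Ioc (0 : ℝ) (1/2) → 1 ≤ r →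
          ‖K t r‖ ≤ t ^ (-(α + 1/2)) * Real.exp (-(α + β + 1) * r) * r⁻¹) →
        ∀ f : ℝ → ℂ,
          MemLp f (ENNReal.ofReal p) ((μj α β).restrict (Set.Ioi 0)) →
          (∫⁻ t in Set.Ioc (0 : ℝ) (1/2),
              ENNReal.ofReal
                (‖∫ r in Set.Ici (1 : ℝ), K t r * f r * ((Δj α β r : ℝ) : ℂ)‖ ^ p *
                  Δj α β t)) ^ (1 / p) ≤
            ENNReal.ofReal C *
              eLpNorm f (ENNReal.ofReal p) ((μj α β).restrict (Set.Ioi 0)) := by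
  have hα : -(1/2:ℝ) < α := lt_trans hβ hβα
  have h2α : (0:ℝ) ≤ 2*α+1 := by linarith
  have h2β : (0:ℝ) ≤ 2*β+1 := by linarith
  have hρ : (0:ℝ) < α + β + 1 := by linarith
  have hp0 : (0:ℝ) < p := lt_trans one_pos hp1
  set q : ℝ := p / (p - 1) with hqdef
  have hpq : p.HolderConjugate q :=
    (Real.holderConjugate_iff_eq_conjExponent hp1).mpr rfl
  have hq1 : 1 < q := hpq.symm.lt
  have hq0 : (0:ℝ) < q := lt_trans one_pos hq1
  have hq2 : (2:ℝ) ≤ q := by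
    rw [hqdef, le_div_iff₀ (by linarith : (0:ℝ) < p - 1)]
    linarith
  have hone_div : 1/p + 1/q = 1 := by
    rw [one_div, one_div]; exact hpq.inv_add_inv_eq_one
  -- the constant B
  set B : ℝ≥0∞ := ∫⁻ t in Ioc (0:ℝ) (1/2),
      ENNReal.ofReal (t ^ (-(α+1/2)*p) * Δj α β t) with hBdef
  have hB : B ≠ ⊤ := by
    have hbound : ∀ t ∈ Ioc (0:ℝ) (1/2),
        ENNReal.ofReal (t ^ (-(α+1/2)*p) * Δj α β t)
          ≤ ENNReal.ofReal ((4:ℝ)^(2*α+1) * 4^(2*β+1)) := by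
      intro t ht
      apply ENNReal.ofReal_le_ofReal
      have h1 : t ^ (-(α+1/2)*p) * Δj α β t
          ≤ t ^ (-(α+1/2)*p) * ((4:ℝ)^(2*α+1) * 4^(2*β+1) * t^(2*α+1)) :=
        mul_le_mul_of_nonneg_left (Δj_le_small h2α h2β ht.1 ht.2)
          (Real.rpow_nonneg ht.1.le _)
      have h2 : t ^ (-(α+1/2)*p) * t^(2*α+1) = t ^ (-(α+1/2)*p + (2*α+1)) :=
        (Real.rpow_add ht.1 _ _).symm
      have h3 : t ^ (-(α+1/2)*p + (2*α+1)) ≤ 1 := by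
        apply Real.rpow_le_one ht.1.le (by linarith [ht.2])
        nlinarith [mul_nonneg (by linarith : (0:ℝ) ≤ α + 1/2) (by linarith : (0:ℝ) ≤ 2 - p)]
      calc t ^ (-(α+1/2)*p) * Δj α β t
          ≤ t ^ (-(α+1/2)*p) * ((4:ℝ)^(2*α+1) * 4^(2*β+1) * t^(2*α+1)) := h1
        _ = (4:ℝ)^(2*α+1) * 4^(2*β+1) * (t ^ (-(α+1/2)*p) * t^(2*α+1)) := by ring
        _ ≤ (4:ℝ)^(2*α+1) * 4^(2*β+1) * 1 := by
            rw [h2]; exact mul_le_mul_of_nonneg_left h3 (by positivity)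
        _ = (4:ℝ)^(2*α+1) * 4^(2*β+1) := mul_one _
    have hle : B ≤ ENNReal.ofReal ((4:ℝ)^(2*α+1) * 4^(2*β+1)) * volume (Ioc (0:ℝ) (1/2)) := by
      rw [hBdef]
      calc ∫⁻ t in Ioc (0:ℝ) (1/2), ENNReal.ofReal (t ^ (-(α+1/2)*p) * Δj α β t)
          ≤ ∫⁻ _ in Ioc (0:ℝ) (1/2), ENNReal.ofReal ((4:ℝ)^(2*α+1) * 4^(2*β+1)) :=
            setLIntegral_mono' measurableSet_Ioc hbound
        _ = _ := setLIntegral_const _ _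
    refine ne_top_of_le_ne_top ?_ hle
    rw [Real.volume_Ioc]
    exact ENNReal.mul_ne_top ENNReal.ofReal_ne_top ENNReal.ofReal_ne_top
  -- the constant D
  set D : ℝ≥0∞ := ∫⁻ r in Ici (1:ℝ),
      ENNReal.ofReal ((Real.exp (-(α+β+1)*r) * r⁻¹)^q * Δj α β r) with hDdef
  have hD : D ≠ ⊤ := by
    have hbound : ∀ r ∈ Ici (1:ℝ),
        ENNReal.ofReal ((Real.exp (-(α+β+1)*r) * r⁻¹)^q * Δj α β r)
          ≤ ENNReal.ofReal ((2:ℝ)^(2*(α+β+1))) * ENNReal.ofReal (r ^ (-2:ℝ)) := by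
      intro r hr
      have hr0 : (0:ℝ) < r := lt_of_lt_of_le one_pos hr
      rw [← ENNReal.ofReal_mul (by positivity)]
      apply ENNReal.ofReal_le_ofReal
      have hgq : (Real.exp (-(α+β+1)*r) * r⁻¹)^q
          = Real.exp (-(α+β+1)*r*q) * r^(-q) := by
        rw [Real.mul_rpow (Real.exp_pos _).le (inv_nonneg.mpr hr0.le), ← Real.exp_mul,
          Real.inv_rpow hr0.le, ← Real.rpow_neg hr0.le]
      have hΔ : Δj α β r ≤ 2^(2*(α+β+1)) * Real.exp (2*(α+β+1)*r) :=
        Δj_le_large h2α h2β hr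
      have hexp : Real.exp (-(α+β+1)*r*q) * Real.exp (2*(α+β+1)*r) ≤ 1 := by
        rw [← Real.exp_add, Real.exp_le_one_iff]
        nlinarith [mul_nonneg (mul_nonneg hρ.le hr0.le) (by linarith : (0:ℝ) ≤ q - 2)]
      have hrq : r ^ (-q) ≤ r ^ (-2:ℝ) :=
        Real.rpow_le_rpow_of_exponent_le hr (by linarith)
      have hnn1 : (0:ℝ) ≤ Real.exp (-(α+β+1)*r*q) * r^(-q) := by positivity
      calc (Real.exp (-(α+β+1)*r) * r⁻¹)^q * Δj α β r
          = Real.exp (-(α+β+1)*r*q) * r^(-q) * Δj α β r := by rw [hgq]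
        _ ≤ Real.exp (-(α+β+1)*r*q) * r^(-q) * (2^(2*(α+β+1)) * Real.exp (2*(α+β+1)*r)) :=
            mul_le_mul_of_nonneg_left hΔ hnn1
        _ = (2:ℝ)^(2*(α+β+1)) * (Real.exp (-(α+β+1)*r*q) * Real.exp (2*(α+β+1)*r)) * r^(-q) := by
            ring
        _ ≤ (2:ℝ)^(2*(α+β+1)) * 1 * r ^ (-2:ℝ) := by
            apply mul_le_mul (mul_le_mul_of_nonneg_left hexp (by positivity)) hrq
              (Real.rpow_nonneg hr0.le _) (by positivity)
        _ = (2:ℝ)^(2*(α+β+1)) * r ^ (-2:ℝ) := by ring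
    have hint : (∫⁻ r in Ici (1:ℝ), ENNReal.ofReal (r ^ (-2:ℝ))) < ⊤ := by
      rw [setLIntegral_congr (Ioi_ae_eq_Ici (a := (1:ℝ))).symm]
      exact (integrableOn_Ioi_rpow_of_lt (by norm_num) one_pos).lintegral_lt_top
    have hle : D ≤ ENNReal.ofReal ((2:ℝ)^(2*(α+β+1)))
        * ∫⁻ r in Ici (1:ℝ), ENNReal.ofReal (r ^ (-2:ℝ)) := by
      rw [hDdef, ← lintegral_const_mul' _ _ ENNReal.ofReal_ne_top]
      exact setLIntegral_mono' measurableSet_Ici hbound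
    exact ne_top_of_le_ne_top (ENNReal.mul_ne_top ENNReal.ofReal_ne_top hint.ne) hle
  set E : ℝ≥0∞ := B ^ (1/p) * D ^ (1/q) with hEdef
  have hE : E ≠ ⊤ :=
    ENNReal.mul_ne_top (ENNReal.rpow_ne_top_of_nonneg (by positivity) hB)
      (ENNReal.rpow_ne_top_of_nonneg (by positivity) hD)
  refine ⟨E.toReal + 1, by linarith [ENNReal.toReal_nonneg (a := E)], ?_⟩
  intro K hK hKb f hf
  set S : ℝ≥0∞ := eLpNorm f (ENNReal.ofReal p) ((μj α β).restrict (Set.Ioi 0)) with hSdef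
  have hS : S ≠ ⊤ := hf.2.ne
  have hSform : S = (∫⁻ x, (‖f x‖₊ : ℝ≥0∞) ^ p ∂((μj α β).restrict (Set.Ioi 0))) ^ (1/p) := by
    rw [hSdef, eLpNorm_eq_lintegral_rpow_enorm_toReal (ENNReal.ofReal_pos.mpr hp0).ne'
      ENNReal.ofReal_ne_top, ENNReal.toReal_ofReal hp0.le]
    simp only [enorm_eq_nnnorm]
  set I : ℝ≥0∞ := ∫⁻ r in Ici (1:ℝ),
      ENNReal.ofReal (Real.exp (-(α+β+1)*r) * r⁻¹) * (‖f r‖₊ : ℝ≥0∞)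
        * ENNReal.ofReal (Δj α β r) with hIdef
  have hfν : AEStronglyMeasurable f (volume.restrict (Ici (1:ℝ))) :=
    AEStronglyMeasurable.mono_ac (vol_restrict_ac α β) hf.1
  have hgmeas : Measurable fun r : ℝ => Real.exp (-(α+β+1)*r) * r⁻¹ :=
    (Real.measurable_exp.comp (measurable_id.const_mul (-(α+β+1)))).mul measurable_inv
  have hΔmeas : Measurable fun r : ℝ => ENNReal.ofReal (Δj α β r) :=
    (measurable_Δj α β).ennreal_ofReal
  have hrle : (μj α β).restrict (Ici (1:ℝ)) ≤ (μj α β).restrict (Set.Ioi 0) :=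
    Measure.restrict_mono (Set.Ici_subset_Ioi.mpr one_pos) le_rfl
  -- Hölder
  have hIle : I ≤ D ^ (1/q) * S := by
    have hFmeas : AEMeasurable
        (fun r => (‖f r‖₊ : ℝ≥0∞) * (ENNReal.ofReal (Δj α β r)) ^ (1/p))
        (volume.restrict (Ici (1:ℝ))) :=
      hfν.enorm.mul ((hΔmeas.pow_const _).aemeasurable)
    have hGmeas : AEMeasurable
        (fun r => ENNReal.ofReal (Real.exp (-(α+β+1)*r) * r⁻¹)
          * (ENNReal.ofReal (Δj α β r)) ^ (1/q)) (volume.restrict (Ici (1:ℝ))) :=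
      (hgmeas.ennreal_ofReal.mul (hΔmeas.pow_const _)).aemeasurable
    have holder := ENNReal.lintegral_mul_le_Lp_mul_Lq (volume.restrict (Ici (1:ℝ)))
      hpq hFmeas hGmeas
    have hIFG : I = ∫⁻ r in Ici (1:ℝ),
        ((fun r => (‖f r‖₊ : ℝ≥0∞) * (ENNReal.ofReal (Δj α β r)) ^ (1/p))
          * (fun r => ENNReal.ofReal (Real.exp (-(α+β+1)*r) * r⁻¹)
            * (ENNReal.ofReal (Δj α β r)) ^ (1/q))) r := by
      rw [hIdef]
      apply setLIntegral_congr_fun measurableSet_Ici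
      intro r hr
      have h0 : (0:ℝ) < r := lt_of_lt_of_le one_pos hr
      have hsplit : ENNReal.ofReal (Δj α β r) =
          (ENNReal.ofReal (Δj α β r)) ^ (1/p) * (ENNReal.ofReal (Δj α β r)) ^ (1/q) := by
        rw [← ENNReal.rpow_add _ _ (ENNReal.ofReal_pos.mpr (Δj_pos α β h0)).ne'
          ENNReal.ofReal_ne_top, hone_div, ENNReal.rpow_one]
      simp only [Pi.mul_apply]
      calc ENNReal.ofReal (Real.exp (-(α+β+1)*r) * r⁻¹) * (‖f r‖₊ : ℝ≥0∞)
            * ENNReal.ofReal (Δj α β r)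
          = ENNReal.ofReal (Real.exp (-(α+β+1)*r) * r⁻¹) * (‖f r‖₊ : ℝ≥0∞)
            * ((ENNReal.ofReal (Δj α β r)) ^ (1/p) * (ENNReal.ofReal (Δj α β r)) ^ (1/q)) := by
            rw [← hsplit]
        _ = (‖f r‖₊ : ℝ≥0∞) * (ENNReal.ofReal (Δj α β r)) ^ (1/p)
            * (ENNReal.ofReal (Real.exp (-(α+β+1)*r) * r⁻¹)
              * (ENNReal.ofReal (Δj α β r)) ^ (1/q)) := by ring
    have hFp : (∫⁻ r in Ici (1:ℝ),
        ((‖f r‖₊ : ℝ≥0∞) * (ENNReal.ofReal (Δj α β r)) ^ (1/p)) ^ p) ≤ S ^ p := by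
      have step1 : (∫⁻ r in Ici (1:ℝ),
          ((‖f r‖₊ : ℝ≥0∞) * (ENNReal.ofReal (Δj α β r)) ^ (1/p)) ^ p)
          = ∫⁻ r in Ici (1:ℝ),
            ((fun r => ENNReal.ofReal (Δj α β r)) * fun r => (‖f r‖₊ : ℝ≥0∞) ^ p) r := by
        apply setLIntegral_congr_fun measurableSet_Ici
        intro r _
        simp only [Pi.mul_apply]
        rw [ENNReal.mul_rpow_of_nonneg _ _ hp0.le, ← ENNReal.rpow_mul,
          one_div_mul_cancel hp0.ne', ENNReal.rpow_one, mul_comm]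
      have step2 : (∫⁻ r in Ici (1:ℝ),
          ((fun r => ENNReal.ofReal (Δj α β r)) * fun r => (‖f r‖₊ : ℝ≥0∞) ^ p) r)
          = ∫⁻ r, (‖f r‖₊ : ℝ≥0∞) ^ p ∂((μj α β).restrict (Ici 1)) := by
        have hres : (μj α β).restrict (Ici (1:ℝ))
            = (volume.restrict (Ici (1:ℝ))).withDensity (fun t => ENNReal.ofReal (Δj α β t)) :=
          restrict_withDensity measurableSet_Ici _
        rw [hres, lintegral_withDensity_eq_lintegral_mul₀' hΔmeas.aemeasurable ?_]
        rw [← hres]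
        exact ((hf.1.mono_measure hrle).enorm.pow_const p)
      have step3 : (∫⁻ r, (‖f r‖₊ : ℝ≥0∞) ^ p ∂((μj α β).restrict (Ici 1)))
          ≤ ∫⁻ x, (‖f x‖₊ : ℝ≥0∞) ^ p ∂((μj α β).restrict (Set.Ioi 0)) :=
        lintegral_mono' hrle le_rfl
      have hSp : S ^ p = ∫⁻ x, (‖f x‖₊ : ℝ≥0∞) ^ p ∂((μj α β).restrict (Set.Ioi 0)) := by
        rw [hSform, ← ENNReal.rpow_mul, one_div_mul_cancel hp0.ne', ENNReal.rpow_one]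
      rw [step1, step2, hSp]
      exact step3
    have hGq : (∫⁻ r in Ici (1:ℝ),
        (ENNReal.ofReal (Real.exp (-(α+β+1)*r) * r⁻¹)
          * (ENNReal.ofReal (Δj α β r)) ^ (1/q)) ^ q) = D := by
      rw [hDdef]
      apply setLIntegral_congr_fun measurableSet_Ici
      intro r hr
      have h0 : (0:ℝ) < r := lt_of_lt_of_le one_pos hr
      have hg0 : (0:ℝ) ≤ Real.exp (-(α+β+1)*r) * r⁻¹ := by positivity
      beta_reduce
      rw [ENNReal.mul_rpow_of_nonneg _ _ hq0.le, ← ENNReal.rpow_mul,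
        one_div_mul_cancel hq0.ne', ENNReal.rpow_one,
        ENNReal.ofReal_rpow_of_nonneg hg0 hq0.le,
        ← ENNReal.ofReal_mul (Real.rpow_nonneg hg0 _)]
    calc I = _ := hIFG
      _ ≤ (∫⁻ r in Ici (1:ℝ),
            ((‖f r‖₊ : ℝ≥0∞) * (ENNReal.ofReal (Δj α β r)) ^ (1/p)) ^ p) ^ (1/p)
          * (∫⁻ r in Ici (1:ℝ),
            (ENNReal.ofReal (Real.exp (-(α+β+1)*r) * r⁻¹)
              * (ENNReal.ofReal (Δj α β r)) ^ (1/q)) ^ q) ^ (1/q) := holder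
      _ ≤ (S ^ p) ^ (1/p) * D ^ (1/q) := by
          rw [hGq]
          exact mul_le_mul_left (ENNReal.rpow_le_rpow hFp (by positivity)) _
      _ = S * D ^ (1/q) := by
          rw [← ENNReal.rpow_mul, mul_one_div_cancel hp0.ne', ENNReal.rpow_one]
      _ = D ^ (1/q) * S := mul_comm _ _
  have hIfin : I ≠ ⊤ :=
    ne_top_of_le_ne_top
      (ENNReal.mul_ne_top (ENNReal.rpow_ne_top_of_nonneg (by positivity) hD) hS) hIle
  -- inner pointwise bound
  have hX : ∀ t ∈ Ioc (0:ℝ) (1/2),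
      (‖∫ r in Ici (1:ℝ), K t r * f r * ((Δj α β r : ℝ) : ℂ)‖₊ : ℝ≥0∞)
        ≤ ENNReal.ofReal (t ^ (-(α+1/2))) * I := by
    intro t ht
    refine le_trans (enorm_integral_le_lintegral_enorm _) ?_
    rw [hIdef, ← lintegral_const_mul' _ _ ENNReal.ofReal_ne_top]
    refine setLIntegral_mono' measurableSet_Ici ?_
    intro r hr
    have hr0 : (0:ℝ) < r := lt_of_lt_of_le one_pos hr
    have hΔ0 : 0 ≤ Δj α β r := (Δj_pos α β hr0).le
    have hnorm : (‖K t r * f r * ((Δj α β r : ℝ) : ℂ)‖₊ : ℝ≥0∞)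
        = (‖K t r‖₊ : ℝ≥0∞) * (‖f r‖₊ : ℝ≥0∞) * ENNReal.ofReal (Δj α β r) := by
      simp only [nnnorm_mul, ENNReal.coe_mul]
      congr 1
      rw [← enorm_eq_nnnorm, ← ofReal_norm_eq_enorm, Complex.norm_real, Real.norm_eq_abs,
        abs_of_nonneg hΔ0]
    have hKle : (‖K t r‖₊ : ℝ≥0∞)
        ≤ ENNReal.ofReal (t ^ (-(α+1/2))) * ENNReal.ofReal (Real.exp (-(α+β+1)*r) * r⁻¹) := by
      rw [← enorm_eq_nnnorm, ← ofReal_norm_eq_enorm, ← ENNReal.ofReal_mul (Real.rpow_nonneg ht.1.le _)]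
      apply ENNReal.ofReal_le_ofReal
      calc ‖K t r‖ ≤ t ^ (-(α + 1/2)) * Real.exp (-(α + β + 1) * r) * r⁻¹ := hKb t r ht hr
        _ = t ^ (-(α + 1/2)) * (Real.exp (-(α+β+1) * r) * r⁻¹) := by ring
    calc (‖K t r * f r * ((Δj α β r : ℝ) : ℂ)‖₊ : ℝ≥0∞)
        = (‖K t r‖₊ : ℝ≥0∞) * (‖f r‖₊ : ℝ≥0∞) * ENNReal.ofReal (Δj α β r) := hnorm
      _ ≤ (ENNReal.ofReal (t ^ (-(α+1/2))) * ENNReal.ofReal (Real.exp (-(α+β+1)*r) * r⁻¹))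
          * (‖f r‖₊ : ℝ≥0∞) * ENNReal.ofReal (Δj α β r) :=
          mul_le_mul_left (mul_le_mul_left hKle _) _
      _ = ENNReal.ofReal (t ^ (-(α+1/2)))
          * (ENNReal.ofReal (Real.exp (-(α+β+1)*r) * r⁻¹) * (‖f r‖₊ : ℝ≥0∞)
            * ENNReal.ofReal (Δj α β r)) := by ring
  -- conclusion
  have hIp : I ^ p ≠ ⊤ := ENNReal.rpow_ne_top_of_nonneg hp0.le hIfin
  calc (∫⁻ t in Set.Ioc (0 : ℝ) (1/2),
        ENNReal.ofReal
          (‖∫ r in Set.Ici (1 : ℝ), K t r * f r * ((Δj α β r : ℝ) : ℂ)‖ ^ p * Δj α β t)) ^ (1/p)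
      ≤ (I ^ p * B) ^ (1/p) := by
        apply ENNReal.rpow_le_rpow ?_ (by positivity)
        rw [hBdef, ← lintegral_const_mul' _ _ hIp]
        refine setLIntegral_mono' measurableSet_Ioc ?_
        intro t ht
        have h1 : ENNReal.ofReal
            (‖∫ r in Set.Ici (1 : ℝ), K t r * f r * ((Δj α β r : ℝ) : ℂ)‖ ^ p * Δj α β t)
            = (‖∫ r in Set.Ici (1 : ℝ), K t r * f r * ((Δj α β r : ℝ) : ℂ)‖₊ : ℝ≥0∞) ^ p
              * ENNReal.ofReal (Δj α β t) := by
          rw [ENNReal.ofReal_mul (by positivity),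
            ← ENNReal.ofReal_rpow_of_nonneg (norm_nonneg _) hp0.le,
            ofReal_norm_eq_enorm, enorm_eq_nnnorm]
        have h2 : ((‖∫ r in Set.Ici (1 : ℝ), K t r * f r * ((Δj α β r : ℝ) : ℂ)‖₊ : ℝ≥0∞)) ^ p
            ≤ (ENNReal.ofReal (t ^ (-(α+1/2))) * I) ^ p :=
          ENNReal.rpow_le_rpow (hX t ht) hp0.le
        have h3 : (ENNReal.ofReal (t ^ (-(α+1/2))) * I) ^ p
            = ENNReal.ofReal (t ^ (-(α+1/2)*p)) * I ^ p := by
          rw [ENNReal.mul_rpow_of_nonneg _ _ hp0.le,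
            ENNReal.ofReal_rpow_of_nonneg (Real.rpow_nonneg ht.1.le _) hp0.le,
            ← Real.rpow_mul ht.1.le]
        have h4 : I ^ p * ENNReal.ofReal (t ^ (-(α+1/2)*p) * Δj α β t)
            = (ENNReal.ofReal (t ^ (-(α+1/2)*p)) * I ^ p) * ENNReal.ofReal (Δj α β t) := by
          rw [ENNReal.ofReal_mul (Real.rpow_nonneg ht.1.le _)]; ring
        rw [h1, h4, ← h3]
        exact mul_le_mul_left h2 _
    _ = I * B ^ (1/p) := by
        rw [ENNReal.mul_rpow_of_nonneg _ _ (by positivity : (0:ℝ) ≤ 1/p),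
          ← ENNReal.rpow_mul, mul_one_div_cancel hp0.ne', ENNReal.rpow_one]
    _ ≤ (D ^ (1/q) * S) * B ^ (1/p) := mul_le_mul_left hIle _
    _ = E * S := by rw [hEdef]; ring
    _ ≤ ENNReal.ofReal (E.toReal + 1) * S := by
        apply mul_le_mul_left
        calc E = ENNReal.ofReal E.toReal := (ENNReal.ofReal_toReal hE).symm
          _ ≤ ENNReal.ofReal (E.toReal + 1) := ENNReal.ofReal_le_ofReal (by linarith)
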